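/- Let k ≥ 1 and let ζ ∈ ℂ, ζ ≠ 0, be such that ζ is not a root of unity (ζ^m ≠ 1 for every m ≥ 1). Then the ℂ-dimension of the centralizer subalgebra {X : Matrix I_k I_k ℂ | X·D(k,ζ) = D(k,ζ)·X and X·P_k = P_k·X} equals the binomial coefficient C(2k − 1, k), i.e. half of C(2k, k). -/

import Mathlib

open Matrix

/-- The number of `-1` factors (encoded as `true`) in a simple tensor index. -/
def wt {k : ℕ} (r : Fin k → Bool) : ℕ := (Finset.univ.filter fun i => r i = true).card

/-- The sign-reversal `-r` of an index, `(−r) i = ¬ (r i)`. -/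
def negt {k : ℕ} (r : Fin k → Bool) : Fin k → Bool := fun i => !(r i)

/-- The matrix of `g^{⊗k}` on `V^{⊗k}` for `g = diag(ζ⁻¹, ζ)`. -/
noncomputable def Dmat (k : ℕ) (ζ : ℂ) : Matrix (Fin k → Bool) (Fin k → Bool) ℂ :=
  Matrix.diagonal fun r => ζ ^ ((k : ℤ) - 2 * (wt r : ℤ))

/-- The 0–1 matrix with `P r s = 1` iff `s = −r`. -/
noncomputable def Pmat (k : ℕ) : Matrix (Fin k → Bool) (Fin k → Bool) ℂ :=
  Matrix.of fun r s => if s = negt r then 1 else 0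

/-- The centralizer of a matrix `M`, as a submodule of the matrix algebra. -/
noncomputable def commSub {I : Type*} [Fintype I] [DecidableEq I] (M : Matrix I I ℂ) :
    Submodule ℂ (Matrix I I ℂ) where
  carrier := {X | X * M = M * X}
  add_mem' := by
    intro a b ha hb
    simp only [Set.mem_setOf_eq] at *
    rw [add_mul, mul_add, ha, hb]
  zero_mem' := by simp
  smul_mem' := by
    intro c X hX
    simp only [Set.mem_setOf_eq] at *
    rw [smul_mul_assoc, mul_smul_comm, hX]

/-! ### Auxiliary lemmas -/

lemma negt_negt {k : ℕ} (r : Fin k → Bool) : negt (negt r) = r := by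
  funext i; simp [negt]

lemma wt_le {k : ℕ} (r : Fin k → Bool) : wt r ≤ k := by
  classical
  simpa [wt] using Finset.card_filter_le Finset.univ fun i => r i = true

lemma wt_negt {k : ℕ} (r : Fin k → Bool) : wt (negt r) = k - wt r := by
  classical
  have h : (Finset.univ.filter fun i => negt r i = true) =
      Finset.univ \ (Finset.univ.filter fun i => r i = true) := by
    ext i; simp [negt]
  rw [wt, h, Finset.card_sdiff_of_subset (Finset.filter_subset _ _)]
  simp [wt]

lemma wt_negt_eq_iff {k : ℕ} {r s : Fin k → Bool} :
    wt (negt r) = wt (negt s) ↔ wt r = wt s := by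
  rw [wt_negt, wt_negt]
  have hr := wt_le r
  have hs := wt_le s
  omega

lemma zpow_eq_one_iff {ζ : ℂ} (hζ : ∀ m : ℕ, 1 ≤ m → ζ ^ m ≠ 1)
    {d : ℤ} (h : ζ ^ d = 1) : d = 0 := by
  by_contra hd
  have key : ∀ e : ℤ, 0 < e → ζ ^ e = 1 → False := by
    intro e he h1
    have h2 : ζ ^ e.toNat = 1 := by
      rw [← zpow_natCast, Int.toNat_of_nonneg he.le]; exact h1
    exact hζ e.toNat (by omega) h2
  rcases lt_or_gt_of_ne hd with hlt | hgt
  · exact key (-d) (by omega) (by rw [_root_.zpow_neg, h, inv_one])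
  · exact key d hgt h

lemma dvals_inj {k : ℕ} {ζ : ℂ} (hζ0 : ζ ≠ 0) (hζ : ∀ m : ℕ, 1 ≤ m → ζ ^ m ≠ 1)
    {r s : Fin k → Bool}
    (h : ζ ^ ((k : ℤ) - 2 * (wt r : ℤ)) = ζ ^ ((k : ℤ) - 2 * (wt s : ℤ))) :
    wt r = wt s := by
  have h1 : ζ ^ (((k : ℤ) - 2 * (wt r : ℤ)) - ((k : ℤ) - 2 * (wt s : ℤ))) = 1 := by
    rw [zpow_sub₀ hζ0, h, div_self (zpow_ne_zero _ hζ0)]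
  have := zpow_eq_one_iff hζ h1
  omega

lemma mul_pmat_apply {k : ℕ} (X : Matrix (Fin k → Bool) (Fin k → Bool) ℂ)
    (r s : Fin k → Bool) : (X * Pmat k) r s = X r (negt s) := by
  classical
  rw [Matrix.mul_apply]
  have h : ∀ t : Fin k → Bool, (s = negt t) ↔ (t = negt s) := fun t =>
    ⟨fun h => by rw [h, negt_negt], fun h => by rw [h, negt_negt]⟩
  simp only [Pmat, Matrix.of_apply, mul_ite, mul_one, mul_zero]
  rw [Finset.sum_congr rfl fun t _ => if_congr (h t) rfl rfl]
  simp

lemma pmat_mul_apply {k : ℕ} (X : Matrix (Fin k → Bool) (Fin k → Bool) ℂ)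
    (r s : Fin k → Bool) : (Pmat k * X) r s = X (negt r) s := by
  classical
  rw [Matrix.mul_apply]
  simp only [Pmat, Matrix.of_apply, ite_mul, one_mul, zero_mul]
  simp

lemma mem_centralizer_iff {k : ℕ} {ζ : ℂ} (hζ0 : ζ ≠ 0)
    (hζ : ∀ m : ℕ, 1 ≤ m → ζ ^ m ≠ 1)
    (X : Matrix (Fin k → Bool) (Fin k → Bool) ℂ) :
    X ∈ commSub (Dmat k ζ) ⊓ commSub (Pmat k) ↔
      ((∀ r s, wt r ≠ wt s → X r s = 0) ∧ ∀ r s, X (negt r) (negt s) = X r s) := by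
  classical
  have hmem : X ∈ commSub (Dmat k ζ) ⊓ commSub (Pmat k) ↔
      (X * Dmat k ζ = Dmat k ζ * X ∧ X * Pmat k = Pmat k * X) := Iff.rfl
  rw [hmem]
  constructor
  · rintro ⟨hD, hP⟩
    constructor
    · intro r s hne
      have h : (X * Dmat k ζ) r s = (Dmat k ζ * X) r s := by rw [hD]
      rw [Dmat, Matrix.mul_diagonal, Matrix.diagonal_mul] at h
      have hd : ζ ^ ((k : ℤ) - 2 * (wt r : ℤ)) ≠ ζ ^ ((k : ℤ) - 2 * (wt s : ℤ)) :=
        fun hc => hne (dvals_inj hζ0 hζ hc)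
      have h2 : X r s * (ζ ^ ((k : ℤ) - 2 * (wt s : ℤ)) - ζ ^ ((k : ℤ) - 2 * (wt r : ℤ))) = 0 := by
        ring_nf
        ring_nf at h
        rw [mul_comm] at h
        linear_combination h
      rcases mul_eq_zero.1 h2 with h3 | h3
      · exact h3
      · exact absurd (by linear_combination h3) (Ne.symm hd)
    · intro r s
      have h : (X * Pmat k) r (negt s) = (Pmat k * X) r (negt s) := by rw [hP]
      rw [mul_pmat_apply, pmat_mul_apply, negt_negt] at h
      exact h.symm
  · rintro ⟨h1, h2⟩
    constructor
    · ext r s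
      rw [Dmat, Matrix.mul_diagonal, Matrix.diagonal_mul]
      by_cases hw : wt r = wt s
      · rw [hw, mul_comm]
      · rw [h1 r s hw, zero_mul, mul_zero]
    · ext r s
      rw [mul_pmat_apply, pmat_mul_apply]
      have := h2 r (negt s)
      rw [negt_negt] at this
      exact this.symm

/-- Index set of orbit representatives for matrix entries. -/
abbrev Tset (k : ℕ) (i0 : Fin k) : Type :=
  {p : (Fin k → Bool) × (Fin k → Bool) // wt p.1 = wt p.2 ∧ p.1 i0 = false}

lemma negt_i0_false {k : ℕ} {i0 : Fin k} {r : Fin k → Bool} (h0 : ¬ r i0 = false) :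
    negt r i0 = false := by
  have : r i0 = true := by simpa using h0
  simp [negt, this]

/-- The matrix built from a function on orbit representatives. -/
noncomputable def buildX {k : ℕ} (i0 : Fin k) (f : Tset k i0 → ℂ) :
    Matrix (Fin k → Bool) (Fin k → Bool) ℂ :=
  Matrix.of fun r s =>
    if h : wt r = wt s then
      if h0 : r i0 = false then f ⟨(r, s), h, h0⟩
      else f ⟨(negt r, negt s), wt_negt_eq_iff.2 h, negt_i0_false h0⟩
    else 0

lemma card_wt_eq (k w : ℕ) :
    (Finset.univ.filter fun s : Fin k → Bool => wt s = w).card = k.choose w := by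
  classical
  have : (Finset.univ.filter fun s : Fin k → Bool => wt s = w).card =
      (Finset.powersetCard w (Finset.univ : Finset (Fin k))).card := by
    apply Finset.card_bij (fun a _ => Finset.univ.filter fun j => a j = true)
    · intro a ha
      rw [Finset.mem_powersetCard]
      refine ⟨Finset.filter_subset _ _, ?_⟩
      simpa [wt] using (Finset.mem_filter.1 ha).2
    · intro a₁ h₁ a₂ h₂ heq
      funext j
      have h := Finset.ext_iff.1 heq j
      simp only [Finset.mem_filter, Finset.mem_univ, true_and] at h
      cases hb1 : a₁ j <;> cases hb2 : a₂ j <;> simp_all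
    · intro b hb
      rw [Finset.mem_powersetCard] at hb
      refine ⟨fun j => decide (j ∈ b), ?_, ?_⟩
      · rw [Finset.mem_filter]; simp only [Finset.mem_univ, true_and, wt]
        rw [show (Finset.univ.filter fun j => decide (j ∈ b) = true) = b by
          ext j; simp]
        exact hb.2
      · ext j; simp
  rw [this, Finset.card_powersetCard, Finset.card_univ, Fintype.card_fin]

lemma card_wt_false_eq (k w : ℕ) (i0 : Fin k) :
    (Finset.univ.filter fun r : Fin k → Bool => r i0 = false ∧ wt r = w).card =
      (k - 1).choose w := by
  classical
  have : (Finset.univ.filter fun r : Fin k → Bool => r i0 = false ∧ wt r = w).card =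
      (Finset.powersetCard w ((Finset.univ : Finset (Fin k)).erase i0)).card := by
    apply Finset.card_bij (fun a _ => Finset.univ.filter fun j => a j = true)
    · intro a ha
      rw [Finset.mem_powersetCard]
      rw [Finset.mem_filter] at ha
      refine ⟨?_, by simpa [wt] using ha.2.2⟩
      intro j hj
      rw [Finset.mem_filter] at hj
      rw [Finset.mem_erase]
      refine ⟨?_, Finset.mem_univ _⟩
      rintro rfl
      rw [ha.2.1] at hj
      simp at hj
    · intro a₁ h₁ a₂ h₂ heq
      funext j
      have h := Finset.ext_iff.1 heq j
      simp only [Finset.mem_filter, Finset.mem_univ, true_and] at h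
      cases hb1 : a₁ j <;> cases hb2 : a₂ j <;> simp_all
    · intro b hb
      rw [Finset.mem_powersetCard] at hb
      refine ⟨fun j => decide (j ∈ b), ?_, ?_⟩
      · rw [Finset.mem_filter]; simp only [Finset.mem_univ, true_and, wt]
        have hi0 : i0 ∉ b := fun hc => by
          have := hb.1 hc
          rw [Finset.mem_erase] at this
          exact this.1 rfl
        refine ⟨by simp [hi0], ?_⟩
        rw [show (Finset.univ.filter fun j => decide (j ∈ b) = true) = b by
          ext j; simp]
        exact hb.2
      · ext j; simp
  rw [this, Finset.card_powersetCard, Finset.card_erase_of_mem (Finset.mem_univ _),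
    Finset.card_univ, Fintype.card_fin]

lemma card_Tset (k : ℕ) (hk : 1 ≤ k) (i0 : Fin k) :
    Fintype.card (Tset k i0) = (2 * k - 1).choose k := by
  classical
  rw [Fintype.card_subtype]
  rw [Finset.card_filter]
  rw [Fintype.sum_prod_type]
  have step1 : ∀ r : Fin k → Bool,
      (∑ s : Fin k → Bool, if wt r = wt s ∧ r i0 = false then 1 else 0) =
        if r i0 = false then k.choose (wt r) else 0 := by
    intro r
    by_cases h0 : r i0 = false
    · rw [if_pos h0]
      rw [← card_wt_eq k (wt r), Finset.card_filter]
      apply Finset.sum_congr rfl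
      intro s _
      by_cases hw : wt s = wt r
      · rw [if_pos ⟨hw.symm, h0⟩, if_pos hw]
      · rw [if_neg (fun hc => hw hc.1.symm), if_neg hw]
    · rw [if_neg h0]
      apply Finset.sum_eq_zero
      intro s _
      rw [if_neg (fun hc => h0 hc.2)]
  rw [Finset.sum_congr rfl fun r _ => step1 r]
  rw [← Finset.sum_filter]
  -- now : ∑ r ∈ filter (· i0 = false), k.choose (wt r)
  have hmaps : ∀ r ∈ (Finset.univ.filter fun r : Fin k → Bool => r i0 = false),
      wt r ∈ Finset.range (k + 1) := by
    intro r _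
    rw [Finset.mem_range]
    exact Nat.lt_succ_of_le (wt_le r)
  rw [← Finset.sum_fiberwise_of_maps_to hmaps fun r => k.choose (wt r)]
  have step2 : ∀ w ∈ Finset.range (k + 1),
      (∑ r ∈ (Finset.univ.filter fun r : Fin k → Bool => r i0 = false).filter
          fun r => wt r = w, k.choose (wt r)) = (k - 1).choose w * k.choose w := by
    intro w _
    rw [Finset.filter_filter]
    rw [Finset.sum_congr rfl fun r hr => by
      rw [(Finset.mem_filter.1 hr).2.2]]
    rw [Finset.sum_const, card_wt_false_eq k w i0, smul_eq_mul]
  rw [Finset.sum_congr rfl step2]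
  -- Vandermonde
  have hv : ((k - 1) + k).choose k =
      ∑ w ∈ Finset.range (k + 1), (k - 1).choose w * k.choose (k - w) := by
    rw [Nat.add_choose_eq]
    rw [Finset.Nat.sum_antidiagonal_eq_sum_range_succ_mk]
  have : ∑ w ∈ Finset.range (k + 1), (k - 1).choose w * k.choose w =
      ((k - 1) + k).choose k := by
    rw [hv]
    apply Finset.sum_congr rfl
    intro w hw
    rw [Finset.mem_range] at hw
    rw [Nat.choose_symm (by omega)]
  rw [this]
  congr 1
  omega

/-- For `ζ` not a root of unity, the centralizer algebra `Z_k(D_∞)` of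
`{D(k,ζ), P_k}` has dimension `C(2k−1, k)`. -/
theorem stmt11 (k : ℕ) (hk : 1 ≤ k) (ζ : ℂ) (hζ0 : ζ ≠ 0)
    (hζ : ∀ m : ℕ, 1 ≤ m → ζ ^ m ≠ 1) :
    Module.finrank ℂ ↥(commSub (Dmat k ζ) ⊓ commSub (Pmat k)) =
      (2 * k - 1).choose k := by
  classical
  set i0 : Fin k := ⟨0, hk⟩ with hi0
  -- evaluation linear map
  let Φ : ↥(commSub (Dmat k ζ) ⊓ commSub (Pmat k)) →ₗ[ℂ] (Tset k i0 → ℂ) :=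
    { toFun := fun X p => X.1 p.1.1 p.1.2
      map_add' := fun X Y => rfl
      map_smul' := fun c X => rfl }
  have hinj : Function.Injective Φ := by
    intro X Y hXY
    apply Subtype.ext
    have hX := (mem_centralizer_iff hζ0 hζ X.1).1 X.2
    have hY := (mem_centralizer_iff hζ0 hζ Y.1).1 Y.2
    ext r s
    by_cases hw : wt r = wt s
    · by_cases h0 : r i0 = false
      · exact congrFun hXY ⟨(r, s), hw, h0⟩
      · have h := congrFun hXY ⟨(negt r, negt s), wt_negt_eq_iff.2 hw, negt_i0_false h0⟩
        simp only [Φ] at h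
        rw [← hX.2 r s, ← hY.2 r s]
        exact h
    · rw [hX.1 r s hw, hY.1 r s hw]
  have hsurj : Function.Surjective Φ := by
    intro f
    have hmem : buildX i0 f ∈ commSub (Dmat k ζ) ⊓ commSub (Pmat k) := by
      rw [mem_centralizer_iff hζ0 hζ]
      constructor
      · intro r s hw
        simp only [buildX, Matrix.of_apply]
        rw [dif_neg hw]
      · intro r s
        simp only [buildX, Matrix.of_apply]
        by_cases hw : wt r = wt s
        · rw [dif_pos hw, dif_pos (wt_negt_eq_iff.2 hw)]
          by_cases h0 : r i0 = false
          · have hn0 : ¬ negt r i0 = false := by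
              simp [negt, h0]
            rw [dif_pos h0, dif_neg hn0]
            congr 1
            apply Subtype.ext
            simp [negt_negt]
          · rw [dif_neg h0, dif_pos (negt_i0_false h0)]
        · rw [dif_neg hw, dif_neg (fun hc => hw (wt_negt_eq_iff.1 hc))]
    refine ⟨⟨buildX i0 f, hmem⟩, ?_⟩
    funext p
    obtain ⟨⟨r, s⟩, hw, h0⟩ := p
    show buildX i0 f r s = f ⟨(r, s), hw, h0⟩
    simp only [buildX, Matrix.of_apply]
    rw [dif_pos hw, dif_pos h0]
  have e : ↥(commSub (Dmat k ζ) ⊓ commSub (Pmat k)) ≃ₗ[ℂ] (Tset k i0 → ℂ) :=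
    LinearEquiv.ofBijective Φ ⟨hinj, hsurj⟩
  rw [e.finrank_eq, Module.finrank_pi, card_Tset k hk i0]
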